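/- If k is a positive natural number and ε > 0 satisfies k²·ε ≤ 1, then the product ∏_{i=0}^{k−1} (1 + i·ε) is at most 1 + e·k²·ε, where e is Euler's number. -/
import Mathlib


open Finset

theorem prod_one_add_mul_le (k : ℕ) (hk : 0 < k) (ε : ℝ) (hε : 0 < ε)
    (h : (k : ℝ) ^ 2 * ε ≤ 1) :
    ∏ i ∈ Finset.range k, (1 + (i : ℝ) * ε) ≤ 1 + Real.exp 1 * (k : ℝ) ^ 2 * ε := by
  set x : ℝ := (k : ℝ) ^ 2 * ε with hx
  have hx0 : 0 ≤ x := by positivity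
  have step1 : ∏ i ∈ Finset.range k, (1 + (i : ℝ) * ε) ≤ (1 + (k : ℝ) * ε) ^ k := by
    calc ∏ i ∈ Finset.range k, (1 + (i : ℝ) * ε)
        ≤ (1 + (k : ℝ) * ε) ^ (Finset.range k).card := by
          rw [← Finset.prod_const]
          apply Finset.prod_le_prod
          · intro i _; positivity
          · intro i hi
            have : (i : ℝ) ≤ (k : ℝ) := by
              exact_mod_cast (Finset.mem_range.mp hi).le
            nlinarith
      _ = (1 + (k : ℝ) * ε) ^ k := by rw [Finset.card_range]
  have step2 : (1 + (k : ℝ) * ε) ^ k ≤ Real.exp ((k : ℝ) * ε) ^ k := by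
    apply pow_le_pow_left₀ (by positivity)
    linarith [Real.add_one_le_exp ((k : ℝ) * ε)]
  have step3 : Real.exp ((k : ℝ) * ε) ^ k = Real.exp x := by
    rw [← Real.exp_nat_mul, hx]; ring_nf
  have step4 : Real.exp x ≤ 1 + Real.exp 1 * x := by
    have h1 : Real.exp x * (1 - x) ≤ 1 := by
      have := Real.add_one_le_exp (-x)
      have h2 : (1 - x) ≤ Real.exp (-x) := by linarith
      calc Real.exp x * (1 - x) ≤ Real.exp x * Real.exp (-x) := by
            apply mul_le_mul_of_nonneg_left h2 (Real.exp_pos x).le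
        _ = 1 := by rw [← Real.exp_add]; simp
    have h3 : Real.exp x ≤ Real.exp 1 := Real.exp_le_exp.mpr h
    nlinarith [(Real.exp_pos x).le]
  calc ∏ i ∈ Finset.range k, (1 + (i : ℝ) * ε) ≤ Real.exp ((k : ℝ) * ε) ^ k :=
        step1.trans step2
    _ = Real.exp x := step3
    _ ≤ 1 + Real.exp 1 * x := step4
    _ = 1 + Real.exp 1 * (k : ℝ) ^ 2 * ε := by rw [hx]; ring
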